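/- The twisted-cube support C(c,ℓ) is closed in ℝ^n (with the Euclidean topology) if and only if m_σ ∈ C(c,ℓ) for every sign vector σ ∈ {+,−}^n. -/

import Mathlib

/-- The affine functions `A_j(x) = ℓ_j − Σ_{k>j} c_{jk} x_k` (for the top index the sum
is empty so `A_n = ℓ_n`). Indices are 0-based via `Fin n`. -/
def Afun (n : ℕ) (c : Fin n → Fin n → ℤ) (L : Fin n → ℤ) (j : Fin n) (x : Fin n → ℝ) : ℝ :=
  (L j : ℝ) - ∑ k ∈ Finset.univ.filter (fun k => j < k), (c j k : ℝ) * x k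

/-- Condition (S-k): `A_k(x) < x_k < 0` or `0 ≤ x_k ≤ A_k(x)`. -/
def Scond (n : ℕ) (c : Fin n → Fin n → ℤ) (L : Fin n → ℤ) (k : Fin n) (x : Fin n → ℝ) : Prop :=
  (Afun n c L k x < x k ∧ x k < 0) ∨ (0 ≤ x k ∧ x k ≤ Afun n c L k x)

/-- The twisted-cube support `C(c,ℓ)`. -/
def Cset (n : ℕ) (c : Fin n → Fin n → ℤ) (L : Fin n → ℤ) : Set (Fin n → ℝ) :=
  {x | ∀ k, Scond n c L k x}

/-- The polytope `P(c,ℓ) = {x : 0 ≤ x_j ≤ A_j(x) for all j}`. -/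
def Pset (n : ℕ) (c : Fin n → Fin n → ℤ) (L : Fin n → ℤ) : Set (Fin n → ℝ) :=
  {x | ∀ j, 0 ≤ x j ∧ x j ≤ Afun n c L j x}

/-- Condition (P): for each `k`, whenever the coordinates above `k` satisfy
`0 ≤ x_j ≤ A_j(x)`, one has `A_k(x) ≥ 0`. (For the top index this says `ℓ_n ≥ 0`.) -/
def CondP (n : ℕ) (c : Fin n → Fin n → ℤ) (L : Fin n → ℤ) : Prop :=
  ∀ k : Fin n, ∀ x : Fin n → ℝ,
    (∀ j : Fin n, k < j → 0 ≤ x j ∧ x j ≤ Afun n c L j x) →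
    0 ≤ Afun n c L k x

/-- The Cartier data `m_σ` for a sign vector `σ` (`true` = `+`, `false` = `−`), defined by
downward recursion: `m_{σ,j} = 0` if `σ_j = +`, and `m_{σ,j} = A_j(m_σ)` if `σ_j = −`. -/
noncomputable def mvec (n : ℕ) (c : Fin n → Fin n → ℤ) (L : Fin n → ℤ)
    (σ : Fin n → Bool) (j : Fin n) : ℝ :=
  if σ j then 0
  else (L j : ℝ) - ∑ k ∈ (Finset.univ.filter (fun k => j < k)).attach,
      (c j k.1 : ℝ) * mvec n c L σ k.1
termination_by n - j.1
decreasing_by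
  have hk := Fin.lt_iff_val_lt_val.mp (Finset.mem_filter.mp k.2).2
  have := k.1.isLt
  omega

section Aux

variable (n : ℕ) (c : Fin n → Fin n → ℤ) (L : Fin n → ℤ)

lemma afun_attach (j : Fin n) (w : Fin n → ℝ) :
    (L j : ℝ) - ∑ k ∈ (Finset.univ.filter (fun k => j < k)).attach, (c j k.1 : ℝ) * w k.1
      = Afun n c L j w := by
  rw [Afun, Finset.sum_attach _ (fun k => (c j k : ℝ) * w k)]

lemma mvec_eq (σ : Fin n → Bool) (j : Fin n) :
    mvec n c L σ j = if σ j then 0 else Afun n c L j (mvec n c L σ) := by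
  rw [mvec]
  split
  · rfl
  · exact afun_attach n c L j _

lemma afun_congr {j : Fin n} {x y : Fin n → ℝ} (h : ∀ i, j < i → x i = y i) :
    Afun n c L j x = Afun n c L j y := by
  unfold Afun
  congr 1
  refine Finset.sum_congr rfl fun i hi => ?_
  rw [h i (Finset.mem_filter.mp hi).2]

lemma continuous_afun (j : Fin n) : Continuous (Afun n c L j) := by
  unfold Afun
  exact continuous_const.sub (continuous_finset_sum _ fun i _ =>
    continuous_const.mul (continuous_apply i))

lemma mvec_congr (σ σ' : Fin n → Bool) :
    ∀ (d : ℕ) (j : Fin n), n - j.1 ≤ d → (∀ i, j ≤ i → σ i = σ' i) →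
      mvec n c L σ j = mvec n c L σ' j := by
  intro d
  induction d with
  | zero => intro j hj _; have := j.isLt; omega
  | succ d ih =>
    intro j hj h
    rw [mvec_eq, mvec_eq, h j le_rfl]
    split
    · rfl
    · refine afun_congr n c L fun i hi => ?_
      have hi' := Fin.lt_iff_val_lt_val.mp hi
      exact ih i (by omega) (fun i' hi'' => h i' (le_trans (le_of_lt hi) hi''))

lemma greedy : ∀ (d : ℕ) (a x : Fin n → ℝ),
    (∀ i : Fin n, n - d ≤ i.1 → 0 ≤ x i ∧ x i ≤ Afun n c L i x) →
    ∃ σ : Fin n → Bool,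
      ∑ i ∈ Finset.univ.filter (fun i : Fin n => n - d ≤ i.1), a i * x i ≤
      ∑ i ∈ Finset.univ.filter (fun i : Fin n => n - d ≤ i.1), a i * mvec n c L σ i := by
  intro d
  induction d with
  | zero =>
    intro a x _
    refine ⟨fun _ => true, ?_⟩
    have : Finset.univ.filter (fun i : Fin n => n - 0 ≤ i.1) = ∅ := by
      ext i; simp
    rw [this]; simp
  | succ d ih =>
    intro a x hx
    by_cases hnd : n - (d+1) = n - d
    · rw [hnd]
      exact ih a x (fun i hi => hx i (by omega))
    · have hdn : d + 1 ≤ n := by omega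
      set j : ℕ := n - d - 1 with hj
      have hjn : j < n := by omega
      set jj : Fin n := ⟨j, hjn⟩ with hjjdef
      set T : Finset (Fin n) := Finset.univ.filter (fun i : Fin n => n - d ≤ i.1) with hT
      have hins : Finset.univ.filter (fun i : Fin n => n - (d+1) ≤ i.1) = insert jj T := by
        ext i
        simp only [Finset.mem_filter, Finset.mem_univ, true_and, Finset.mem_insert, hT,
          hjjdef, Fin.ext_iff]
        omega
      have hnotmem : jj ∉ T := by
        simp only [hT, Finset.mem_filter, Finset.mem_univ, true_and, hjjdef]
        omega
      have hfilT : Finset.univ.filter (fun i : Fin n => jj < i) = T := by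
        ext i
        simp only [Finset.mem_filter, Finset.mem_univ, true_and, hT,
          Fin.lt_iff_val_lt_val, hjjdef]
        omega
      have hAT : ∀ z : Fin n → ℝ, Afun n c L jj z = (L jj : ℝ) - ∑ i ∈ T, (c jj i : ℝ) * z i := by
        intro z; rw [Afun, hfilT]
      rw [hins, Finset.sum_insert hnotmem]
      have hxj := hx jj (by simp only [hjjdef, Fin.val_mk]; omega)
      have hx' : ∀ i : Fin n, n - d ≤ i.1 → 0 ≤ x i ∧ x i ≤ Afun n c L i x :=
        fun i hi => hx i (by omega)
      rcases le_or_gt 0 (a jj) with haj | haj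
      · -- take σ' jj = false
        set a' : Fin n → ℝ := fun i => a i - a jj * (c jj i : ℝ) with ha'
        obtain ⟨σ, hσ⟩ := ih a' x hx'
        set σ' := Function.update σ jj false with hσ'def
        have hmm : ∀ i ∈ T, mvec n c L σ' i = mvec n c L σ i := by
          intro i hi
          have hji : j < i.1 := by
            have := Finset.mem_filter.mp hi; omega
          refine mvec_congr n c L σ' σ n i (by omega) fun i' hi' => ?_
          have : i' ≠ jj := by
            intro h; rw [h] at hi'
            have := Fin.le_iff_val_le_val.mp hi'
            simp [hjjdef] at this; omega
          simp [hσ'def, Function.update_of_ne this]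
        have key : ∀ z : Fin n → ℝ,
            a jj * ((L jj : ℝ) - ∑ i ∈ T, (c jj i : ℝ) * z i) + ∑ i ∈ T, a i * z i
              = a jj * (L jj : ℝ) + ∑ i ∈ T, a' i * z i := by
          intro z
          have h1 : ∑ i ∈ T, a' i * z i
              = ∑ i ∈ T, a i * z i - ∑ i ∈ T, a jj * ((c jj i : ℝ) * z i) := by
            rw [← Finset.sum_sub_distrib]
            exact Finset.sum_congr rfl fun i _ => by simp [ha']; ring
          rw [h1, ← Finset.mul_sum]; ring
        refine ⟨σ', ?_⟩
        rw [Finset.sum_insert hnotmem]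
        have hmj : mvec n c L σ' jj = (L jj : ℝ) - ∑ i ∈ T, (c jj i : ℝ) * mvec n c L σ i := by
          rw [mvec_eq]
          simp only [hσ'def, Function.update_self, if_false, Bool.false_eq_true]
          rw [hAT]
          congr 1
          exact Finset.sum_congr rfl fun i hi => by rw [hmm i hi]
        have hsum' : ∑ i ∈ T, a i * mvec n c L σ' i = ∑ i ∈ T, a i * mvec n c L σ i :=
          Finset.sum_congr rfl fun i hi => by rw [hmm i hi]
        rw [hmj, hsum']
        calc a jj * x jj + ∑ i ∈ T, a i * x i
            ≤ a jj * Afun n c L jj x + ∑ i ∈ T, a i * x i := by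
              exact add_le_add_left (mul_le_mul_of_nonneg_left hxj.2 haj) _
          _ = a jj * (L jj : ℝ) + ∑ i ∈ T, a' i * x i := by rw [hAT]; exact key x
          _ ≤ a jj * (L jj : ℝ) + ∑ i ∈ T, a' i * mvec n c L σ i := add_le_add_right hσ _
          _ = a jj * ((L jj : ℝ) - ∑ i ∈ T, (c jj i : ℝ) * mvec n c L σ i)
                + ∑ i ∈ T, a i * mvec n c L σ i := (key (mvec n c L σ)).symm
      · -- take σ' jj = true
        obtain ⟨σ, hσ⟩ := ih a x hx'
        set σ' := Function.update σ jj true with hσ'def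
        have hmm : ∀ i ∈ T, mvec n c L σ' i = mvec n c L σ i := by
          intro i hi
          have hji : j < i.1 := by
            have := Finset.mem_filter.mp hi; omega
          refine mvec_congr n c L σ' σ n i (by omega) fun i' hi' => ?_
          have : i' ≠ jj := by
            intro h; rw [h] at hi'
            have := Fin.le_iff_val_le_val.mp hi'
            simp [hjjdef] at this; omega
          simp [hσ'def, Function.update_of_ne this]
        refine ⟨σ', ?_⟩
        rw [Finset.sum_insert hnotmem]
        have hmj : mvec n c L σ' jj = 0 := by
          rw [mvec_eq]; simp [hσ'def]
        have hsum' : ∑ i ∈ T, a i * mvec n c L σ' i = ∑ i ∈ T, a i * mvec n c L σ i :=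
          Finset.sum_congr rfl fun i hi => by rw [hmm i hi]
        rw [hmj, hsum']
        have : a jj * x jj ≤ 0 := mul_nonpos_of_nonpos_of_nonneg (le_of_lt haj) hxj.1
        linarith

lemma memC_nonneg {σ : Fin n → Bool} (h : mvec n c L σ ∈ Cset n c L) (k : Fin n) :
    0 ≤ Afun n c L k (mvec n c L σ) := by
  have hs := h k
  rw [Scond] at hs
  have hm := mvec_eq n c L σ k
  by_cases hσ : σ k
  · rw [hσ, if_pos rfl] at hm
    rcases hs with ⟨_, h2⟩ | ⟨_, h2⟩ <;> rw [hm] at * <;> linarith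
  · rw [if_neg (by simp [hσ])] at hm
    rcases hs with ⟨h1, _⟩ | ⟨h1, _⟩
    · rw [hm] at h1; linarith
    · rw [hm] at h1; linarith

lemma condP_of (h : ∀ σ : Fin n → Bool, mvec n c L σ ∈ Cset n c L) : CondP n c L := by
  intro k x hx
  have hfil : Finset.univ.filter (fun i : Fin n => k < i)
      = Finset.univ.filter (fun i : Fin n => n - (n - (k.1+1)) ≤ i.1) := by
    ext i
    simp only [Finset.mem_filter, Finset.mem_univ, true_and, Fin.lt_iff_val_lt_val]
    have := k.isLt; have := i.isLt
    omega
  obtain ⟨σ, hσ⟩ := greedy n c L (n - (k.1+1)) (fun i => (c k i : ℝ)) x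
    (fun i hi => hx i (by rw [Fin.lt_iff_val_lt_val]; have := k.isLt; omega))
  have h1 : Afun n c L k (mvec n c L σ) ≤ Afun n c L k x := by
    rw [Afun, Afun, hfil]
    linarith
  exact le_trans (memC_nonneg n c L (h σ) k) h1

lemma Cset_eq_Pset (h : CondP n c L) : Cset n c L = Pset n c L := by
  ext x
  constructor
  · intro hx
    have key : ∀ d : ℕ, ∀ k : Fin n, n - k.1 ≤ d → 0 ≤ x k ∧ x k ≤ Afun n c L k x := by
      intro d
      induction d with
      | zero => intro k hk; have := k.isLt; omega
      | succ d ih =>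
        intro k hk
        have hA : 0 ≤ Afun n c L k x := by
          refine h k x fun j hj => ih j ?_
          have := Fin.lt_iff_val_lt_val.mp hj
          omega
        rcases hx k with ⟨h1, h2⟩ | hgood
        · linarith
        · exact hgood
    exact fun k => key n k (by omega)
  · intro hx k
    exact Or.inr (hx k)

lemma isClosed_Pset : IsClosed (Pset n c L) := by
  have : Pset n c L = ⋂ j : Fin n, ({x | 0 ≤ x j} ∩ {x | x j ≤ Afun n c L j x}) := by
    ext x
    simp only [Pset, Set.mem_iInter, Set.mem_setOf_eq, Set.mem_inter_iff]
  rw [this]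
  refine isClosed_iInter fun j => IsClosed.inter ?_ ?_
  · exact isClosed_le continuous_const (continuous_apply j)
  · exact isClosed_le (continuous_apply j) (continuous_afun n c L j)

noncomputable def yfun (n : ℕ) (c : Fin n → Fin n → ℤ) (L : Fin n → ℤ)
    (σ : Fin n → Bool) (kk : Fin n) (t : ℝ) (j : Fin n) : ℝ :=
  if kk < j then mvec n c L σ j
  else if kk = j then (1 - t) * Afun n c L kk (mvec n c L σ)
  else min ((L j : ℝ) - ∑ i ∈ (Finset.univ.filter (fun i => j < i)).attach,
      (c j i.1 : ℝ) * yfun n c L σ kk t i.1) 0 / 2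
termination_by n - j.1
decreasing_by
  have hk := Fin.lt_iff_val_lt_val.mp (Finset.mem_filter.mp i.2).2
  have := i.1.isLt
  omega

variable (σ : Fin n → Bool) (kk : Fin n) (t : ℝ)

lemma yfun_gt {j : Fin n} (h : kk < j) : yfun n c L σ kk t j = mvec n c L σ j := by
  rw [yfun, if_pos h]

lemma yfun_k : yfun n c L σ kk t kk = (1 - t) * Afun n c L kk (mvec n c L σ) := by
  rw [yfun, if_neg (lt_irrefl kk), if_pos rfl]

lemma yfun_lt {j : Fin n} (h : j < kk) :
    yfun n c L σ kk t j = min (Afun n c L j (yfun n c L σ kk t)) 0 / 2 := by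
  rw [yfun, if_neg (by exact fun hc => absurd (lt_trans h hc) (lt_irrefl _)),
    if_neg (by exact fun hc => absurd (hc ▸ h) (lt_irrefl _)),
    afun_attach]

lemma afun_yfun {j : Fin n} (h : kk ≤ j) :
    Afun n c L j (yfun n c L σ kk t) = Afun n c L j (mvec n c L σ) :=
  afun_congr n c L fun i hi => yfun_gt n c L σ kk t (lt_of_le_of_lt h hi)

lemma yfun_memC (hA : ∀ j, kk < j → 0 ≤ Afun n c L j (mvec n c L σ))
    (hAk : Afun n c L kk (mvec n c L σ) < 0) (ht : 0 < t) (ht1 : t < 1) :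
    yfun n c L σ kk t ∈ Cset n c L := by
  intro j
  rcases lt_trichotomy kk j with h | h | h
  · right
    rw [yfun_gt n c L σ kk t h, afun_yfun n c L σ kk t (le_of_lt h), mvec_eq]
    have := hA j h
    split
    · exact ⟨le_refl 0, this⟩
    · exact ⟨this, le_refl _⟩
  · subst h
    left
    rw [yfun_k, afun_yfun n c L σ kk t le_rfl]
    constructor
    · nlinarith
    · nlinarith
  · rw [Scond, yfun_lt n c L σ kk t h]
    rcases le_or_gt 0 (Afun n c L j (yfun n c L σ kk t)) with hA0 | hA0
    · right
      rw [min_eq_right hA0]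
      norm_num
      exact hA0
    · left
      rw [min_eq_left (le_of_lt hA0)]
      constructor <;> linarith

lemma yfun_zero_not_memC (hAk : Afun n c L kk (mvec n c L σ) < 0) :
    yfun n c L σ kk 0 ∉ Cset n c L := by
  intro h
  have hs := h kk
  rw [Scond, yfun_k, afun_yfun n c L σ kk 0 le_rfl] at hs
  rcases hs with ⟨h1, _⟩ | ⟨h1, _⟩ <;> nlinarith

lemma continuous_yfun : ∀ (d : ℕ) (j : Fin n), n - j.1 ≤ d →
    Continuous (fun s : ℝ => yfun n c L σ kk s j) := by
  intro d
  induction d with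
  | zero => intro j hj; have := j.isLt; omega
  | succ d ih =>
    intro j hj
    rcases lt_trichotomy kk j with h | h | h
    · simp only [fun s : ℝ => yfun_gt n c L σ kk s h]
      exact continuous_const
    · subst h
      simp only [fun s : ℝ => yfun_k n c L σ kk s]
      exact (continuous_const.sub continuous_id).mul continuous_const
    · have heq : (fun s : ℝ => yfun n c L σ kk s j)
          = fun s : ℝ => min ((L j : ℝ) - ∑ i ∈ Finset.univ.filter (fun i => j < i),
              (c j i : ℝ) * yfun n c L σ kk s i) 0 / 2 := by
        funext s
        rw [yfun_lt n c L σ kk s h, Afun]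
      rw [heq]
      refine Continuous.div_const (Continuous.min ?_ continuous_const) 2
      refine continuous_const.sub (continuous_finset_sum _ fun i hi => ?_)
      have hji := Fin.lt_iff_val_lt_val.mp (Finset.mem_filter.mp hi).2
      exact continuous_const.mul (ih i (by omega))

end Aux

/-- `C(c,ℓ)` is closed iff `m_σ ∈ C(c,ℓ)` for every sign vector `σ`. -/
theorem isClosed_Cset_iff_mvec_mem (n : ℕ) (hn : 0 < n)
    (c : Fin n → Fin n → ℤ) (L : Fin n → ℤ) :
    IsClosed (Cset n c L) ↔ ∀ σ : Fin n → Bool, mvec n c L σ ∈ Cset n c L := by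

  constructor
  · intro hcl σ
    by_contra hσ
    have hbad : ∃ k : Fin n, Afun n c L k (mvec n c L σ) < 0 := by
      rw [Cset, Set.mem_setOf_eq, not_forall] at hσ
      obtain ⟨k, hk⟩ := hσ
      refine ⟨k, ?_⟩
      by_contra h0
      push_neg at h0
      apply hk
      rw [Scond, mvec_eq]
      split
      · exact Or.inr ⟨le_rfl, h0⟩
      · exact Or.inr ⟨h0, le_rfl⟩
    set S : Finset (Fin n) := Finset.univ.filter (fun k => Afun n c L k (mvec n c L σ) < 0)
      with hS
    have hSne : S.Nonempty := by
      obtain ⟨k, hk⟩ := hbad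
      exact ⟨k, by simp [hS, hk]⟩
    set k : Fin n := S.max' hSne with hkdef
    have hAk : Afun n c L k (mvec n c L σ) < 0 := by
      have h1 : k ∈ S := S.max'_mem hSne
      rw [hS, Finset.mem_filter] at h1
      exact h1.2
    have hA : ∀ j, k < j → 0 ≤ Afun n c L j (mvec n c L σ) := by
      intro j hj
      by_contra h0
      push_neg at h0
      have hjS : j ∈ S := by simp [hS, h0]
      exact absurd (Finset.le_max' S j hjS) (not_le.mpr hj)
    have hcont : Continuous (fun s : ℝ => yfun n c L σ k s) :=
      continuous_pi fun j => continuous_yfun n c L σ k n j (by omega)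
    haveI hneb : (nhdsWithin (0:ℝ) (Set.Ioo (0:ℝ) 1)).NeBot := by
      refine mem_closure_iff_nhdsWithin_neBot.mp ?_
      rw [closure_Ioo (by norm_num : (0:ℝ) ≠ 1)]
      exact ⟨le_rfl, by norm_num⟩
    have hmem : yfun n c L σ k 0 ∈ closure (Cset n c L) := by
      refine mem_closure_of_tendsto
        ((hcont.tendsto 0).mono_left (nhdsWithin_le_nhds (s := Set.Ioo (0:ℝ) 1))) ?_
      filter_upwards [eventually_mem_nhdsWithin] with s hs
      exact yfun_memC n c L σ k s hA hAk hs.1 hs.2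
    rw [hcl.closure_eq] at hmem
    exact yfun_zero_not_memC n c L σ k hAk hmem
  · intro h
    rw [Cset_eq_Pset n c L (condP_of n c L h)]
    exact isClosed_Pset n c L
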